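/- Let Σ be a complete fan in N_Q ≅ Q^n whose rays have primitive generators p_1,...,p_m. Then Σ admits a complete collection of Demazure roots e_1,...,e_n (⟨p_i, e_j⟩ = -δ_{ij} for 1 ≤ i,j ≤ n) if and only if, after renumbering, p_1,...,p_n form a basis of the lattice N and each remaining primitive generator p_j (j > n) has all coordinates non-positive in this basis. -/

import Mathlib

lemma dot_coord {n : ℕ} (B : Module.Basis (Fin n) ℤ (Fin n → ℤ)) (v : Fin n → ℤ) (j : Fin n) :
    dotProduct v (fun i => -(B.coord j (fun k => if i = k then 1 else 0)))
      = -(B.repr v j) := by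
  have h := LinearMap.pi_apply_eq_sum_univ (B.coord j) v
  have : dotProduct v (fun i => -(B.coord j (fun k => if i = k then 1 else 0)))
      = -∑ i, v i • B.coord j (fun k => if i = k then 1 else 0) := by
    simp [dotProduct, Finset.sum_neg_distrib, smul_eq_mul]
  rw [this, ← h]; rfl



/-- `e ∈ M` is a Demazure root of the (complete) fan with primitive ray
generators `p_1,…,p_m`, with distinguished ray `ρ`: `⟨p_ρ, e⟩ = -1` and
`⟨p_{ρ'}, e⟩ ≥ 0` for every other ray `ρ'`. -/
def IsDemazureRoot {n m : ℕ} (p : Fin m → (Fin n → ℤ)) (ρ : Fin m)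
    (e : Fin n → ℤ) : Prop :=
  dotProduct (p ρ) e = -1 ∧
  ∀ ρ' : Fin m, ρ' ≠ ρ → 0 ≤ dotProduct (p ρ') e

/-- A complete fan in `N_ℚ ≅ ℚ^n` with primitive ray generators `p_1,…,p_m`
admits a complete collection of Demazure roots `e_1,…,e_n`
(`⟨p_i, e_j⟩ = -δ_{ij}`) if and only if, after renumbering, `p_1,…,p_n` form a
basis of the lattice `N` and each remaining generator `p_j` (`j > n`) has all
coordinates non-positive in this basis. -/
theorem complete_collection_iff_basis_with_nonpositive_coords
    {n m : ℕ} (hnm : n ≤ m) (p : Fin m → (Fin n → ℤ))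
    (hp : Function.Injective p) :
    (∃ (r : Fin n → Fin m) (e : Fin n → (Fin n → ℤ)),
        Function.Injective r ∧
        (∀ j : Fin n, IsDemazureRoot p (r j) (e j)) ∧
        (∀ i j : Fin n,
          dotProduct (p (r i)) (e j) = if i = j then -1 else 0)) ↔
    (∃ (σ : Equiv.Perm (Fin m)) (B : Module.Basis (Fin n) ℤ (Fin n → ℤ)),
        (∀ i : Fin n, B i = p (σ (Fin.castLE hnm i))) ∧
        ∀ j : Fin m, n ≤ (j : ℕ) → ∀ i : Fin n, B.repr (p (σ j)) i ≤ 0) := by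
  classical
  constructor
  · rintro ⟨r, e, hr, hdem, hmat⟩
    -- matrices
    set P : Matrix (Fin n) (Fin n) ℤ := fun i k => p (r i) k with hP
    set E : Matrix (Fin n) (Fin n) ℤ := fun k j => -(e j k) with hE
    have hPE : P * E = 1 := by
      ext i j
      have := hmat i j
      rw [Matrix.mul_apply, Matrix.one_apply]; simp only [hP, hE]
      have : ∑ k, p (r i) k * -(e j k) = -(dotProduct (p (r i)) (e j)) := by
        simp [dotProduct, Finset.sum_neg_distrib]
      rw [this, hmat i j]
      split <;> simp
    have hEtPt : E.transpose * P.transpose = 1 := by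
      rw [← Matrix.transpose_mul, hPE, Matrix.transpose_one]
    have inst : Invertible P.transpose := invertibleOfLeftInverse P.transpose E.transpose hEtPt
    set f := P.transpose.toLinearEquiv' inst with hf
    set B := (Pi.basisFun ℤ (Fin n)).map f with hB
    have hBi : ∀ i : Fin n, B i = p (r i) := by
      intro i
      rw [hB, Module.Basis.map_apply, Pi.basisFun_apply]
      have : f (Pi.single i 1) = P.transpose.mulVec (Pi.single i 1) := rfl
      rw [this, Matrix.mulVec_single]
      ext k; simp [hP, Matrix.transpose_apply]; rfl
    have hrepr : ∀ (v : Fin n → ℤ) (i : Fin n),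
        B.repr v i = -(dotProduct v (e i)) := by
      intro v i
      have h1 : B.repr v = (Pi.basisFun ℤ (Fin n)).repr (f.symm v) := by
        rw [hB, Module.Basis.map_repr]; rfl
      have h2 : f.symm v = E.transpose.mulVec v := by
        have hs : (↑f.symm : Module.End ℤ (Fin n → ℤ)) = Matrix.toLin' (⅟ P.transpose) :=
          Matrix.toLinearEquiv'_symm_apply _ _
        calc f.symm v = Matrix.toLin' (⅟ P.transpose) v := by rw [← hs]; rfl
          _ = (⅟ P.transpose).mulVec v := Matrix.toLin'_apply _ _
          _ = E.transpose.mulVec v := by rw [invOf_eq_left_inv hEtPt]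
      rw [h1]
      simp only [Pi.basisFun_repr, h2, Matrix.mulVec, dotProduct,
        Matrix.transpose_apply, hE]
      simp [Finset.sum_neg_distrib, mul_comm, Matrix.transpose_apply]
      rw [← Finset.sum_neg_distrib]
      exact Finset.sum_congr rfl fun x _ => by change v x * -e i x = _; ring
    -- the permutation
    let eq1 : Fin n ≃ {x : Fin m // (x : ℕ) < n} :=
      { toFun := fun i => ⟨Fin.castLE hnm i, i.2⟩
        invFun := fun x => ⟨(x : Fin m), x.2⟩
        left_inv := fun i => rfl
        right_inv := fun x => rfl }
    let eq2 : Fin n ≃ Set.range r := Equiv.ofInjective r hr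
    let e' : {x : Fin m // (x : ℕ) < n} ≃ {x : Fin m // x ∈ Set.range r} :=
      eq1.symm.trans eq2
    refine ⟨e'.extendSubtype, B, ?_, ?_⟩
    · intro i
      rw [hBi i]
      congr 1
      have hx : ((Fin.castLE hnm i : Fin m) : ℕ) < n := i.2
      rw [Equiv.extendSubtype_apply_of_mem e' _ hx]
      have : eq1.symm ⟨Fin.castLE hnm i, hx⟩ = i := rfl
      simp only [e', Equiv.trans_apply, this]
      rfl
    · intro j hj i
      have hx : ¬ ((j : ℕ) < n) := not_lt.mpr hj
      have hnot : e'.extendSubtype j ∉ Set.range r :=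
        Equiv.extendSubtype_not_mem e' _ hx
      have hne : e'.extendSubtype j ≠ r i := fun h => hnot ⟨i, h.symm⟩
      have := (hdem i).2 _ hne
      rw [hrepr]
      omega
  · rintro ⟨σ, B, hBi, hcoord⟩
    refine ⟨fun i => σ (Fin.castLE hnm i),
      fun j => fun i => -(B.coord j (fun k => if i = k then 1 else 0)), ?_, ?_, ?_⟩
    · intro a b hab
      have h := congrArg Fin.val (σ.injective hab)
      exact Fin.ext h
    · intro j
      constructor
      · rw [dot_coord, ← hBi j, Module.Basis.repr_self]; simp
      · intro ρ' hρ'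
        rw [dot_coord]
        rcases lt_or_ge ((σ.symm ρ' : Fin m) : ℕ) n with hk | hk
        · set i0 : Fin n := ⟨(σ.symm ρ' : Fin m), hk⟩ with hi0
          have hρ'' : ρ' = σ (Fin.castLE hnm i0) := by
            have : (Fin.castLE hnm i0 : Fin m) = σ.symm ρ' := Fin.ext rfl
            rw [this]; simp
          have hij : i0 ≠ j := by
            intro h; apply hρ'; rw [hρ'', h]
          rw [hρ'', ← hBi i0, Module.Basis.repr_self]
          simp [Finsupp.single_apply, hij]
        · have : ρ' = σ (σ.symm ρ') := by simp
          rw [this]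
          have := hcoord (σ.symm ρ') hk j
          omega
    · intro i j
      rw [dot_coord, ← hBi i, Module.Basis.repr_self]
      simp [Finsupp.single_apply]
      split <;> simp_all [eq_comm]
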